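/- arXiv:2107.06715 — 3 statements merged into one kernel-verified Lean document; each statement's English description precedes it below -/
import Mathlib

section
/- Let U be a finite nonempty ground set, F a nonempty family of subsets of U, and N a natural number. If for each u ∈ U a weight w(u) is chosen uniformly and independently at random from {1,...,N}, then with probability at least 1 - |U|/N there is a unique set S' ∈ F minimizing the total weight w(S') = Σ_{x∈S'} w(x) over all S ∈ F. -/
open scoped Classical

/-- Determination lemma: if `w` and `w'` agree off `u`, `S ∋ u` is a `w`-minimizer and
`T' ∌ u` is a `w'`-minimizer, then `w u ≤ w' u`. -/
private lemma isol_det {α : Type*} [DecidableEq α] {N : ℕ} (F : Finset (Finset α)) (u : α)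
    (w w' : α → Fin N) (hagree : ∀ x, x ≠ u → w x = w' x)
    {S T' : Finset α} (hS : S ∈ F) (hT' : T' ∈ F) (huS : u ∈ S) (huT' : u ∉ T')
    (hSmin : ∀ X ∈ F, (∑ x ∈ S, ((w x : ℕ) + 1)) ≤ ∑ x ∈ X, ((w x : ℕ) + 1))
    (hT'min : ∀ X ∈ F, (∑ x ∈ T', ((w' x : ℕ) + 1)) ≤ ∑ x ∈ X, ((w' x : ℕ) + 1)) :
    (w u : ℕ) ≤ w' u := by
  have hc : ∀ X : Finset α, u ∉ X →
      (∑ x ∈ X, ((w x : ℕ) + 1)) = ∑ x ∈ X, ((w' x : ℕ) + 1) := fun X hX =>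
    Finset.sum_congr rfl fun x hx => by rw [hagree x (fun h => hX (h ▸ hx))]
  have h1 : ((w u : ℕ) + 1) + ∑ x ∈ S.erase u, ((w x : ℕ) + 1)
      = ∑ x ∈ S, ((w x : ℕ) + 1) := Finset.add_sum_erase S (fun x => ((w x : ℕ) + 1)) huS
  have h2 : ((w' u : ℕ) + 1) + ∑ x ∈ S.erase u, ((w' x : ℕ) + 1)
      = ∑ x ∈ S, ((w' x : ℕ) + 1) := Finset.add_sum_erase S (fun x => ((w' x : ℕ) + 1)) huS
  have h3 : (∑ x ∈ S.erase u, ((w x : ℕ) + 1)) = ∑ x ∈ S.erase u, ((w' x : ℕ) + 1) :=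
    hc _ (Finset.notMem_erase u S)
  have h4 := hSmin T' hT'
  have h5 := hT'min S hS
  have h6 := hc T' huT'
  omega

/-- Isolation Lemma (Mulmuley–Vazirani–Vazirani): choosing weights uniformly and
independently from `{1,...,N}`, with probability at least `1 - |U|/N` there is a unique
member of the nonempty family `F` of minimum total weight. -/
theorem isolation_lemma {α : Type*} [Fintype α] [DecidableEq α] [Nonempty α]
    (F : Finset (Finset α)) (hF : F.Nonempty) (N : ℕ) (hN : 0 < N) :
    (1 : ℚ) - (Fintype.card α : ℚ) / N ≤
      ((Finset.univ.filter (fun w : α → Fin N =>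
          ∃! S', S' ∈ F ∧ ∀ S ∈ F,
            (∑ x ∈ S', ((w x : ℕ) + 1)) ≤ ∑ x ∈ S, ((w x : ℕ) + 1))).card : ℚ) /
        (Fintype.card (α → Fin N) : ℚ) := by
  classical
  set c := Fintype.card α with hc
  have hc1 : 1 ≤ c := Fintype.card_pos
  set P : (α → Fin N) → Prop := fun w =>
    ∃! S', S' ∈ F ∧ ∀ S ∈ F,
      (∑ x ∈ S', ((w x : ℕ) + 1)) ≤ ∑ x ∈ S, ((w x : ℕ) + 1) with hP
  set Good := Finset.univ.filter P with hGood
  set Bad := Finset.univ.filter (fun w => ¬ P w) with hBad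
  -- the bad sets for each element u
  set Badu : α → Finset (α → Fin N) := fun u => Finset.univ.filter (fun w =>
    ∃ S ∈ F, ∃ T ∈ F, u ∈ S ∧ u ∉ T ∧
      (∀ X ∈ F, (∑ x ∈ S, ((w x : ℕ) + 1)) ≤ ∑ x ∈ X, ((w x : ℕ) + 1)) ∧
      (∀ X ∈ F, (∑ x ∈ T, ((w x : ℕ) + 1)) ≤ ∑ x ∈ X, ((w x : ℕ) + 1))) with hBadu
  have hsplit : Good.card + Bad.card = N ^ c := by
    rw [hGood, hBad, Finset.card_filter_add_card_filter_not, Finset.card_univ,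
      Fintype.card_fun, Fintype.card_fin]
  -- every bad weight function lies in some Badu u
  have hBadsub : Bad ⊆ Finset.univ.biUnion Badu := by
    intro w hw
    rw [hBad, Finset.mem_filter] at hw
    obtain ⟨-, hw⟩ := hw
    obtain ⟨S, hSF, hSmin⟩ := F.exists_min_image
      (fun X => ∑ x ∈ X, ((w x : ℕ) + 1)) hF
    have h2 : ¬ ∀ y, (y ∈ F ∧ ∀ X ∈ F,
        (∑ x ∈ y, ((w x : ℕ) + 1)) ≤ ∑ x ∈ X, ((w x : ℕ) + 1)) → y = S :=
      fun h => hw ⟨S, ⟨hSF, hSmin⟩, h⟩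
    push_neg at h2
    obtain ⟨T, ⟨hTF, hTmin⟩, hTS⟩ := h2
    have hdiff : ∃ u, (u ∈ S ∧ u ∉ T) ∨ (u ∈ T ∧ u ∉ S) := by
      by_contra h
      push_neg at h
      exact hTS (Finset.ext fun x => ⟨(h x).2, (h x).1⟩)
    obtain ⟨u, hu⟩ := hdiff
    rw [Finset.mem_biUnion]
    refine ⟨u, Finset.mem_univ u, ?_⟩
    rw [hBadu, Finset.mem_filter]
    rcases hu with ⟨huS, huT⟩ | ⟨huT, huS⟩
    · exact ⟨Finset.mem_univ w, S, hSF, T, hTF, huS, huT, hSmin, hTmin⟩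
    · exact ⟨Finset.mem_univ w, T, hTF, S, hSF, huT, huS, hTmin, hSmin⟩
  -- each Badu u is small, via an injection into functions on α \ {u}
  have hBaduCard : ∀ u : α, (Badu u).card ≤ N ^ (c - 1) := by
    intro u
    have hinj : (Badu u).card ≤ (Finset.univ : Finset ({x : α // x ≠ u} → Fin N)).card := by
      apply Finset.card_le_card_of_injOn (fun w (x : {x : α // x ≠ u}) => w x.1)
        (fun _ _ => Finset.mem_univ _)
      intro w hw w' hw' heq
      rw [Finset.mem_coe, hBadu, Finset.mem_filter] at hw hw'
      obtain ⟨-, S, hSF, T, hTF, huS, huT, hSmin, hTmin⟩ := hw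
      obtain ⟨-, S', hS'F, T', hT'F, huS', huT', hS'min, hT'min⟩ := hw'
      have hagree : ∀ x, x ≠ u → w x = w' x := fun x hx => congrFun heq ⟨x, hx⟩
      have hagree' : ∀ x, x ≠ u → w' x = w x := fun x hx => (hagree x hx).symm
      have hle1 : (w u : ℕ) ≤ w' u :=
        isol_det F u w w' hagree hSF hT'F huS huT' hSmin hT'min
      have hle2 : (w' u : ℕ) ≤ w u :=
        isol_det F u w' w hagree' hS'F hTF huS' huT hS'min hTmin
      funext x
      by_cases hx : x = u
      · subst hx; exact Fin.ext (le_antisymm hle1 hle2)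
      · exact hagree x hx
    have hcard : (Finset.univ : Finset ({x : α // x ≠ u} → Fin N)).card = N ^ (c - 1) := by
      rw [Finset.card_univ, Fintype.card_fun, Fintype.card_fin]
      congr 1
      have : Fintype.card {x : α // x ≠ u} = c - 1 := by
        simp [Fintype.card_subtype_compl, hc]
      exact this
    omega
  have hBadCard : Bad.card ≤ c * N ^ (c - 1) := by
    calc Bad.card ≤ (Finset.univ.biUnion Badu).card := Finset.card_le_card hBadsub
      _ ≤ ∑ u : α, (Badu u).card := Finset.card_biUnion_le
      _ ≤ ∑ _u : α, N ^ (c - 1) := Finset.sum_le_sum fun u _ => hBaduCard u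
      _ = c * N ^ (c - 1) := by rw [Finset.sum_const, Finset.card_univ, smul_eq_mul]
  -- final arithmetic over ℚ
  have hNQ : (0 : ℚ) < N := by exact_mod_cast hN
  have hcard : (Fintype.card (α → Fin N) : ℚ) = (N : ℚ) ^ c := by
    rw [Fintype.card_fun, Fintype.card_fin]; push_cast; ring
  rw [hcard, le_div_iff₀ (by positivity)]
  have hpow : (N : ℚ) ^ c = (N : ℚ) ^ (c - 1) * N := by
    rw [← pow_succ]; congr 1; omega
  have key : ((1 : ℚ) - c / N) * (N : ℚ) ^ c = (N : ℚ) ^ c - c * (N : ℚ) ^ (c - 1) := by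
    rw [sub_mul, one_mul, hpow]
    field_simp
  have hGoodQ : (Good.card : ℚ) = (N : ℚ) ^ c - Bad.card := by
    have : (Good.card : ℚ) + Bad.card = (N : ℚ) ^ c := by exact_mod_cast hsplit
    linarith
  have hBadQ : (Bad.card : ℚ) ≤ c * (N : ℚ) ^ (c - 1) := by exact_mod_cast hBadCard
  have : Finset.univ.filter P = Good := rfl
  rw [hc] at key hGoodQ hBadQ ⊢
  calc ((1 : ℚ) - (Fintype.card α : ℚ) / N) * (N : ℚ) ^ Fintype.card α
      = (N : ℚ) ^ Fintype.card α - (Fintype.card α : ℚ) * (N : ℚ) ^ (Fintype.card α - 1) := key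
    _ ≤ (Good.card : ℚ) := by rw [hGoodQ]; linarith
end

section
/- Let G be a finite undirected graph, X ⊆ V(G), and v₁ ∈ X a fixed vertex. Then the number of consistent cuts (X_L, X_R) of G[X] (i.e., partitions of X with no edge of G between X_L and X_R) satisfying v₁ ∈ X_L equals 2^(cc(G[X]) - 1), where cc(G[X]) is the number of connected components of the induced subgraph G[X]. -/
open scoped Classical

private lemma consistent_reach_mem {V : Type*} [DecidableEq V] (G : SimpleGraph V)
    (X : Finset V) (XL : Finset V)
    (hcons : ∀ u ∈ XL, ∀ v ∈ X \ XL, ¬ G.Adj u v)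
    {a b : (X : Set V)} (h : (G.induce (X : Set V)).Reachable a b) :
    a.1 ∈ XL → b.1 ∈ XL := by
  obtain ⟨w⟩ := h
  induction w with
  | nil => exact id
  | @cons u c d hadj w ih =>
    intro ha
    apply ih
    by_contra hc
    exact hcons _ ha _ (Finset.mem_sdiff.mpr ⟨Finset.mem_coe.mp c.2, hc⟩) hadj

private def cmpc {V : Type*} (G : SimpleGraph V) (X : Finset V) (v : V) (h : v ∈ X) :
    (G.induce (X : Set V)).ConnectedComponent :=
  (G.induce (X : Set V)).connectedComponentMk ⟨v, Finset.mem_coe.mpr h⟩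

/-- The number of consistent cuts `(X_L, X_R)` of `G[X]` (represented by the left side
`X_L ⊆ X`, with `X_R = X \ X_L`) having `v₁ ∈ X_L` equals `2 ^ (cc(G[X]) - 1)`. -/
theorem count_consistent_cuts {V : Type*} [Fintype V] [DecidableEq V]
    (G : SimpleGraph V) (X : Finset V) (v₁ : V) (hv : v₁ ∈ X) :
    (Finset.univ.filter (fun XL : Finset V =>
        XL ⊆ X ∧ v₁ ∈ XL ∧ ∀ u ∈ XL, ∀ v ∈ X \ XL, ¬ G.Adj u v)).card =
      2 ^ (Nat.card (G.induce (X : Set V)).ConnectedComponent - 1) := by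
  set C := (G.induce (X : Set V)).ConnectedComponent with hC
  set c₀ : C := cmpc G X v₁ hv with hc₀
  -- Step 1: bijection with subsets of components containing c₀.
  have h1 : (Finset.univ.filter (fun XL : Finset V =>
        XL ⊆ X ∧ v₁ ∈ XL ∧ ∀ u ∈ XL, ∀ v ∈ X \ XL, ¬ G.Adj u v)).card
      = (Finset.univ.filter (fun S : Finset C => c₀ ∈ S)).card := by
    apply Finset.card_bij'
      (i := fun XL _ => Finset.univ.filter
        (fun c : C => ∃ v, ∃ h : v ∈ X, v ∈ XL ∧ cmpc G X v h = c))
      (j := fun S _ => X.filter (fun v => ∃ h : v ∈ X, cmpc G X v h ∈ S))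
    · -- hi : i XL ∈ t
      intro XL hXL
      simp only [Finset.mem_filter, Finset.mem_univ, true_and] at hXL ⊢
      exact ⟨v₁, hv, hXL.2.1, rfl⟩
    · -- hj : j S ∈ s
      intro S hS
      simp only [Finset.mem_filter, Finset.mem_univ, true_and] at hS ⊢
      refine ⟨Finset.filter_subset _ _, ⟨hv, hv, hS⟩, ?_⟩
      intro u hu v hvv hadj
      obtain ⟨huX, h2, hS'⟩ := hu
      rw [Finset.mem_sdiff] at hvv
      apply hvv.2
      have hvx := hvv.1
      refine Finset.mem_filter.mpr ⟨hvx, hvx, ?_⟩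
      have heq : cmpc G X u huX = cmpc G X v hvx :=
        SimpleGraph.ConnectedComponent.sound (SimpleGraph.Adj.reachable hadj)
      rw [← heq]
      exact hS'
    · -- left inverse : j (i XL) = XL
      intro XL hXL
      simp only [Finset.mem_filter, Finset.mem_univ, true_and] at hXL
      obtain ⟨hsub, hv1, hcons⟩ := hXL
      ext v
      simp only [Finset.mem_filter, Finset.mem_univ, true_and]
      constructor
      · rintro ⟨hvX, h2, u, huX, huL, hcmp⟩
        have hr : (G.induce (X : Set V)).Reachable
            ⟨u, Finset.mem_coe.mpr huX⟩ ⟨v, Finset.mem_coe.mpr hvX⟩ :=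
          SimpleGraph.ConnectedComponent.exact hcmp
        exact consistent_reach_mem G X XL hcons hr huL
      · intro hvL
        exact ⟨hsub hvL, hsub hvL, v, hsub hvL, hvL, rfl⟩
    · -- right inverse : i (j S) = S
      intro S hS
      ext c
      simp only [Finset.mem_filter, Finset.mem_univ, true_and]
      constructor
      · rintro ⟨v, hvX, ⟨-, h2, hS'⟩, hcmp⟩
        rw [← hcmp]
        exact hS'
      · intro hcS
        induction c using SimpleGraph.ConnectedComponent.ind with
        | _ a =>
          refine ⟨a.1, Finset.mem_coe.mp a.2, ⟨Finset.mem_coe.mp a.2,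
            Finset.mem_coe.mp a.2, ?_⟩, ?_⟩
          · exact hcS
          · rfl
  -- Step 2: count subsets containing c₀.
  have h2 : (Finset.univ.filter (fun S : Finset C => c₀ ∈ S)).card
      = 2 ^ (Fintype.card C - 1) := by
    have key : (Finset.univ.filter (fun S : Finset C => c₀ ∈ S)).card
        = ((Finset.univ.erase c₀).powerset).card := by
      apply Finset.card_bij'
        (i := fun S _ => S.erase c₀)
        (j := fun T _ => insert c₀ T)
      case hi =>
        intro S hS
        simp only [Finset.mem_powerset]
        intro x hx
        exact Finset.mem_erase.mpr ⟨(Finset.mem_erase.mp hx).1, Finset.mem_univ _⟩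
      case hj =>
        intro T hT
        simp only [Finset.mem_filter, Finset.mem_univ, true_and]
        exact Finset.mem_insert_self _ _
      case left_inv =>
        intro S hS
        simp only [Finset.mem_filter, Finset.mem_univ, true_and] at hS
        exact Finset.insert_erase hS
      case right_inv =>
        intro T hT
        simp only [Finset.mem_powerset] at hT
        refine Finset.erase_insert ?_
        intro hc
        exact (Finset.mem_erase.mp (hT hc)).1 rfl
    rw [key, Finset.card_powerset, Finset.card_erase_of_mem (Finset.mem_univ c₀),
      Finset.card_univ]
  rw [h1, h2, Nat.card_eq_fintype_card]
end

section
/- Let G be a finite graph, R a family of subsets X of V(G) each containing a fixed vertex v₁, let S = {X ∈ R : G[X] is connected}, and let Q = {(X, (X_L, X_R)) : X ∈ R, (X_L,X_R) a consistent cut of G[X] with v₁ ∈ X_L}. Then for any weight function w on V(G) and any target w₀, the cardinality of {(X,C) ∈ Q : w(X) = w₀} is congruent modulo 2 to the cardinality of {X ∈ S : w(X) = w₀}. -/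
open scoped Classical

open Finset

/-- Closure of a cross-edge-free set under reachability in the induced graph. -/
lemma reach_closed {V : Type*} [Fintype V] [DecidableEq V] (G : SimpleGraph V)
    (X L : Finset V) (hL : L ⊆ X)
    (cross : ∀ u ∈ L, ∀ v ∈ X \ L, ¬ G.Adj u v) :
    ∀ {a b : (X : Set V)}, (G.induce (X : Set V)).Reachable a b →
      (a : V) ∈ L → (b : V) ∈ L := by
  intro a b hr ha
  obtain ⟨p⟩ := hr
  induction p with
  | nil => exact ha
  | cons h q ih =>
    rename_i x c d
    apply ih
    by_contra hc
    exact cross x ha c (Finset.mem_sdiff.2 ⟨by simpa using c.2, hc⟩) (by simpa using h)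

/-- For a fixed `X` containing `v₁`, the number of consistent cuts (given by `X_L`)
with `v₁ ∈ X_L` is `1 mod 2` if `G[X]` is connected and `0 mod 2` otherwise. -/
lemma count_cuts {V : Type*} [Fintype V] [DecidableEq V] (G : SimpleGraph V)
    (X : Finset V) (v₁ : V) (hv₁ : v₁ ∈ X) :
    ((X.powerset.filter (fun L => v₁ ∈ L ∧
        ∀ u ∈ L, ∀ v ∈ X \ L, ¬ G.Adj u v)).card : ZMod 2) =
      if (G.induce (X : Set V)).Connected then 1 else 0 := by
  by_cases hconn : (G.induce (X : Set V)).Connected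
  · rw [if_pos hconn]
    have : X.powerset.filter (fun L => v₁ ∈ L ∧
        ∀ u ∈ L, ∀ v ∈ X \ L, ¬ G.Adj u v) = {X} := by
      ext L
      simp only [mem_filter, mem_powerset, mem_singleton]
      constructor
      · rintro ⟨hLX, hv, hcr⟩
        refine le_antisymm hLX fun b hb => ?_
        exact reach_closed G X L hLX hcr
          (hconn.preconnected ⟨v₁, by simpa using hv₁⟩ ⟨b, by simpa using hb⟩) hv
      · rintro rfl
        exact ⟨le_rfl, hv₁, fun u hu v hv => by simp at hv⟩
    rw [this]; simp
  · rw [if_neg hconn]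
    -- find a vertex not reachable from v₁
    have hne : Nonempty (X : Set V) := ⟨⟨v₁, by simpa using hv₁⟩⟩
    have hpre : ¬ (G.induce (X : Set V)).Preconnected := fun h => hconn (by haveI := hne; exact ⟨h⟩)
    simp only [SimpleGraph.Preconnected, not_forall] at hpre
    obtain ⟨a, b, hab⟩ := hpre
    have hv₁' : v₁ ∈ (X : Set V) := by simpa using hv₁
    obtain ⟨u, hu⟩ : ∃ u : (X : Set V), ¬ (G.induce (X : Set V)).Reachable ⟨v₁, hv₁'⟩ u := by
      by_cases h : (G.induce (X : Set V)).Reachable ⟨v₁, hv₁'⟩ a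
      · exact ⟨b, fun h2 => hab (h.symm.trans h2)⟩
      · exact ⟨a, h⟩
    -- the reachability component of u
    set C : Finset V := X.filter (fun y => ∃ h : y ∈ (X : Set V),
      (G.induce (X : Set V)).Reachable u ⟨y, h⟩) with hC
    have huC : (u : V) ∈ C := by
      refine mem_filter.2 ⟨by simpa using u.2, u.2, ?_⟩
      exact SimpleGraph.Reachable.refl _
    have hv₁C : v₁ ∉ C := by
      intro h
      obtain ⟨h1, h2, hr⟩ := mem_filter.1 h
      exact hu hr.symm
    have hCadj : ∀ y ∈ X, ∀ z ∈ X, G.Adj y z → (y ∈ C ↔ z ∈ C) := by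
      intro y hy z hz hadj
      have hadj' : (G.induce (X : Set V)).Adj ⟨y, by simpa using hy⟩ ⟨z, by simpa using hz⟩ := by
        simpa using hadj
      constructor
      · intro h
        obtain ⟨hy0, hy', hr⟩ := mem_filter.1 h
        exact mem_filter.2 ⟨hz, by simpa using hz, hr.trans hadj'.reachable⟩
      · intro h
        obtain ⟨hz0, hz', hr⟩ := mem_filter.1 h
        exact mem_filter.2 ⟨hy, by simpa using hy, hr.trans hadj'.symm.reachable⟩
    -- pairing involution L ↦ symmDiff L C shows the count is even
    rw [show ((X.powerset.filter (fun L => v₁ ∈ L ∧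
        ∀ u ∈ L, ∀ v ∈ X \ L, ¬ G.Adj u v)).card : ZMod 2) =
      ∑ _x ∈ X.powerset.filter (fun L => v₁ ∈ L ∧
        ∀ u ∈ L, ∀ v ∈ X \ L, ¬ G.Adj u v), (1 : ZMod 2) by simp]
    refine Finset.sum_involution (fun L _ => symmDiff L C) ?_ ?_ ?_ ?_
    · intro L hLmem0; decide
    · intro L hLmem0 h
      simp only [ne_eq, symmDiff_eq_left]
      intro hCbot
      rw [hCbot] at huC; simp at huC
    · intro L hLmem
      obtain ⟨hLX, hvL, hcr⟩ := mem_filter.1 hLmem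
      rw [mem_powerset] at hLX
      have hCX : C ⊆ X := filter_subset _ _
      refine mem_filter.2 ⟨mem_powerset.2 ?_, ?_, ?_⟩
      · intro x hx
        rcases Finset.mem_symmDiff.1 hx with ⟨h1, -⟩ | ⟨h1, -⟩
        exacts [hLX h1, hCX h1]
      · exact Finset.mem_symmDiff.2 (Or.inl ⟨hvL, hv₁C⟩)
      · intro y hy z hz hadj
        have hyX : y ∈ X := by
          rcases Finset.mem_symmDiff.1 hy with ⟨h1, -⟩ | ⟨h1, -⟩
          exacts [hLX h1, hCX h1]
        have hzX : z ∈ X := (mem_sdiff.1 hz).1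
        have hzΔ : z ∉ symmDiff L C := (mem_sdiff.1 hz).2
        have hCiff := hCadj y hyX z hzX hadj
        rcases Finset.mem_symmDiff.1 hy with ⟨hyL, hyC⟩ | ⟨hyC, hyL⟩
        · -- y ∈ L, y ∉ C, so z ∉ C; z ∉ Δ means z ∉ L; edge across L: contradiction
          have hzC : z ∉ C := fun h => hyC (hCiff.2 h)
          have hzL : z ∉ L := fun h => hzΔ (Finset.mem_symmDiff.2 (Or.inl ⟨h, hzC⟩))
          exact hcr y hyL z (mem_sdiff.2 ⟨hzX, hzL⟩) hadj
        · -- y ∈ C, y ∉ L, so z ∈ C; z ∉ Δ means z ∈ L; edge from z ∈ L to y ∉ L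
          have hzC : z ∈ C := hCiff.1 hyC
          have hzL : z ∈ L := by
            by_contra h
            exact hzΔ (Finset.mem_symmDiff.2 (Or.inr ⟨hzC, h⟩))
          exact hcr z hzL y (mem_sdiff.2 ⟨hyX, hyL⟩) hadj.symm
    · intro L hLmem0; exact symmDiff_symmDiff_cancel_right C L

/-- Core counting identity of the Cut&Count technique: the number of pairs
`(X, (X_L, X_R))` with `X ∈ R`, `(X_L, X_R)` a consistent cut of `G[X]` with `v₁ ∈ X_L`
(represented by the pair `(X, X_L)`) and `w(X) = w₀`, is congruent modulo 2 to the number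
of `X ∈ R` with `G[X]` connected and `w(X) = w₀`. -/
theorem cut_and_count_parity {V : Type*} [Fintype V] [DecidableEq V]
    (G : SimpleGraph V) (R : Finset (Finset V)) (v₁ : V) (hR : ∀ X ∈ R, v₁ ∈ X)
    (w : V → ℕ) (w₀ : ℕ) :
    (Finset.univ.filter (fun p : Finset V × Finset V =>
        p.1 ∈ R ∧ p.2 ⊆ p.1 ∧ v₁ ∈ p.2 ∧
        (∀ u ∈ p.2, ∀ v ∈ p.1 \ p.2, ¬ G.Adj u v) ∧
        (∑ x ∈ p.1, w x) = w₀)).card ≡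
      (R.filter (fun X =>
        (G.induce (X : Set V)).Connected ∧ (∑ x ∈ X, w x) = w₀)).card [MOD 2] := by
  rw [← ZMod.natCast_eq_natCast_iff _ _ 2]
  have hsplit : Finset.univ.filter (fun p : Finset V × Finset V =>
        p.1 ∈ R ∧ p.2 ⊆ p.1 ∧ v₁ ∈ p.2 ∧
        (∀ u ∈ p.2, ∀ v ∈ p.1 \ p.2, ¬ G.Adj u v) ∧
        (∑ x ∈ p.1, w x) = w₀) =
      (R.filter (fun X => (∑ x ∈ X, w x) = w₀)).biUnion (fun X =>
        (X.powerset.filter (fun L => v₁ ∈ L ∧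
          ∀ u ∈ L, ∀ v ∈ X \ L, ¬ G.Adj u v)).image (fun L => (X, L))) := by
    ext p
    simp only [Finset.mem_filter, Finset.mem_univ, true_and, Finset.mem_biUnion,
      Finset.mem_image, Finset.mem_powerset]
    constructor
    · rintro ⟨h1, h2, h3, h4, h5⟩
      exact ⟨p.1, ⟨h1, h5⟩, p.2, ⟨h2, h3, h4⟩, rfl⟩
    · rintro ⟨X, ⟨hX, hw⟩, L, ⟨hL, hv, hcr⟩, rfl⟩
      exact ⟨hX, hL, hv, hcr, hw⟩
  have hdisj : ∀ X ∈ (R.filter (fun X => (∑ x ∈ X, w x) = w₀)),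
      ∀ Y ∈ (R.filter (fun X => (∑ x ∈ X, w x) = w₀)), X ≠ Y →
      Disjoint ((X.powerset.filter (fun L => v₁ ∈ L ∧
          ∀ u ∈ L, ∀ v ∈ X \ L, ¬ G.Adj u v)).image (fun L => (X, L)))
        ((Y.powerset.filter (fun L => v₁ ∈ L ∧
          ∀ u ∈ L, ∀ v ∈ Y \ L, ¬ G.Adj u v)).image (fun L => (Y, L))) := by
    intro X hX Y hY hXY
    rw [Finset.disjoint_left]
    rintro p hp hq
    obtain ⟨L1, -, rfl⟩ := Finset.mem_image.1 hp
    obtain ⟨L2, -, h2⟩ := Finset.mem_image.1 hq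
    exact hXY ((Prod.mk.injEq _ _ _ _ ▸ h2.symm).1)
  suffices h : ((Finset.univ.filter (fun p : Finset V × Finset V =>
        p.1 ∈ R ∧ p.2 ⊆ p.1 ∧ v₁ ∈ p.2 ∧
        (∀ u ∈ p.2, ∀ v ∈ p.1 \ p.2, ¬ G.Adj u v) ∧
        (∑ x ∈ p.1, w x) = w₀)).card : ZMod 2) =
      ((R.filter (fun X : Finset V =>
        (G.induce (X : Set V)).Connected ∧ (∑ x ∈ X, w x) = w₀)).card : ZMod 2) by
    rw [h]
    congr 1
    apply Finset.card_bij (fun (X : Finset V) _ => ((X : Set V)))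
    · intro X hX
      obtain ⟨hXR, hconn, hw⟩ := Finset.mem_filter.1 hX
      refine Finset.mem_filter.2 ⟨?_, hconn, by rwa [Finset.toFinset_coe]⟩
      show (X : Set V) ∈ R.sup (fun a => ({(a : Set V)} : Finset (Set V)))
      rw [Finset.mem_sup]
      exact ⟨X, hXR, Finset.mem_singleton_self _⟩
    · intro X hX Y hY h
      exact Finset.coe_injective h
    · intro b hb
      obtain ⟨hb1, hconn, hw⟩ := Finset.mem_filter.1 hb
      have hb1' : b ∈ R.sup (fun a => ({(a : Set V)} : Finset (Set V))) := hb1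
      rw [Finset.mem_sup] at hb1'
      obtain ⟨a, haR, hba⟩ := hb1'
      have hba' : b = (a : Set V) := Finset.mem_singleton.1 hba
      subst hba'
      refine ⟨a, Finset.mem_filter.2 ⟨haR, hconn, ?_⟩, rfl⟩
      rw [Finset.toFinset_coe] at hw
      exact hw
  -- main computation
  rw [hsplit, Finset.card_biUnion hdisj]
  have hRHS : (R.filter (fun X : Finset V =>
      (G.induce (X : Set V)).Connected ∧ (∑ x ∈ X, w x) = w₀)) =
      (R.filter (fun X => (∑ x ∈ X, w x) = w₀)).filter
        (fun X : Finset V => (G.induce (X : Set V)).Connected) := by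
    rw [Finset.filter_filter]
    apply Finset.filter_congr
    intro X hX
    exact and_comm
  rw [hRHS, Finset.card_filter, Nat.cast_sum, Nat.cast_sum]
  refine Finset.sum_congr rfl ?_
  intro X hX
  rw [Finset.card_image_of_injective _ (fun a b h => (Prod.mk.injEq _ _ _ _ ▸ h).2)]
  rw [count_cuts G X v₁ (hR X (Finset.mem_filter.1 hX).1)]
  by_cases hc : (G.induce (X : Set V)).Connected
  · rw [if_pos hc, if_pos hc]; simp
  · rw [if_neg hc, if_neg hc]; simp
end
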